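/- If a graph G is isomorphic to an induced subgraph of F₁(s) for some integer s ≥ 3, then λ₂(G) ≤ 1. -/

import Mathlib

/-- The adjacency matrix of a simple graph over `ℝ` is Hermitian. -/
lemma adjMatrix_isHermitian {V : Type*} [Fintype V] (G : SimpleGraph V)
    [DecidableRel G.Adj] : ((G.adjMatrix ℝ)).IsHermitian := by
  rw [Matrix.IsHermitian, Matrix.conjTranspose_eq_transpose_of_trivial]
  exact G.isSymm_adjMatrix

/-- The number of eigenvalues (counted with multiplicity) of the real adjacency matrix of `G`
satisfying the predicate `p`. -/
noncomputable def eigCount {V : Type*} [Fintype V] [DecidableEq V]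
    (G : SimpleGraph V) (p : ℝ → Prop) : ℕ := by
  classical
  exact (Finset.univ.filter fun i =>
    p ((adjMatrix_isHermitian G).eigenvalues i)).card
/-- Vertex type of the graph `F₁(s)`. -/
inductive F1Vert (s : ℕ) : Type
  | v1 : F1Vert s
  | v2 : F1Vert s
  | a1 : F1Vert s
  | a2 : F1Vert s
  | u : Fin s → F1Vert s
  | p : {i : Fin s // 2 ≤ (i : ℕ)} → F1Vert s
  deriving DecidableEq, Fintype

/-- Base relation generating the edges of `F₁(s)` (indices are 0-based: `u 0 = u₁`, …;
pendant vertices `p i` exist for `i ≥ 2`, i.e. at each of `u₃, …, u_s`). -/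
def F1Rel (s : ℕ) : F1Vert s → F1Vert s → Prop
  | .v2, .u _ => True
  | .v1, .u i => 2 ≤ (i : ℕ)
  | .v1, .a1 => True
  | .a1, .u i => (i : ℕ) = 0
  | .v1, .a2 => True
  | .a2, .u i => (i : ℕ) = 1
  | .u i, .p j => i = j.1
  | _, _ => False

/-- The graph `F₁(s)`: obtained from `K_{2,s}` with parts `{v₁, v₂}` and `{u₁, …, u_s}` by
subdividing the edges `v₁u₁` and `v₁u₂` (creating `a₁`, `a₂`) and attaching a pendant edge
(to `p_i`) at each of `u₃, …, u_s`. -/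
def F1 (s : ℕ) : SimpleGraph (F1Vert s) := SimpleGraph.fromRel (F1Rel s)

section Aux

open Matrix Finset

lemma herm_le_one {V : Type*} [Fintype V] [DecidableEq V]
    (A : Matrix V V ℝ) (hA : A.IsHermitian) (w : V → ℝ)
    (hw : ∀ x : V → ℝ, x ⬝ᵥ (A *ᵥ x) ≤ x ⬝ᵥ x + (w ⬝ᵥ x) ^ 2) :
    (Finset.univ.filter fun i => 1 < hA.eigenvalues i).card ≤ 1 := by
  by_contra hc
  push_neg at hc
  obtain ⟨i, hi, j, hj, hij⟩ := Finset.one_lt_card.mp hc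
  simp only [Finset.mem_filter] at hi hj
  have hμi := hi.2; have hμj := hj.2
  set f : V → ℝ := ⇑(hA.eigenvectorBasis i) with hf
  set g : V → ℝ := ⇑(hA.eigenvectorBasis j) with hg
  have hdot : ∀ (p q : EuclideanSpace ℝ V),
      (inner ℝ p q : ℝ) = (⇑p : V → ℝ) ⬝ᵥ (⇑q : V → ℝ) := by
    intro p q
    simp [PiLp.inner_apply, dotProduct, mul_comm]
  have hon := hA.eigenvectorBasis.orthonormal
  have hff : f ⬝ᵥ f = 1 := by
    rw [← hdot]
    rw [real_inner_self_eq_norm_sq, hon.1 i, one_pow]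
  have hgg : g ⬝ᵥ g = 1 := by
    rw [← hdot]
    rw [real_inner_self_eq_norm_sq, hon.1 j, one_pow]
  have hfg : f ⬝ᵥ g = 0 := by
    rw [← hdot]
    exact hon.2 hij
  have hAf : A *ᵥ f = hA.eigenvalues i • f := hA.mulVec_eigenvectorBasis i
  have hAg : A *ᵥ g = hA.eigenvalues j • g := hA.mulVec_eigenvectorBasis j
  -- choose coefficients
  obtain ⟨α, β, hαβ, hwx⟩ : ∃ α β : ℝ, ¬(α = 0 ∧ β = 0) ∧ α * (w ⬝ᵥ f) + β * (w ⬝ᵥ g) = 0 := by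
    by_cases h0 : w ⬝ᵥ f = 0
    · exact ⟨1, 0, by simp, by simp [h0]⟩
    · exact ⟨w ⬝ᵥ g, -(w ⬝ᵥ f), fun h => h0 (by simpa using h.2), by ring⟩
  set x : V → ℝ := α • f + β • g with hx
  have h1 : x ⬝ᵥ (A *ᵥ x) = α^2 * hA.eigenvalues i + β^2 * hA.eigenvalues j := by
    have hgf : g ⬝ᵥ f = 0 := by rw [dotProduct_comm]; exact hfg
    simp only [hx, mulVec_add, mulVec_smul, hAf, hAg, add_dotProduct, dotProduct_add,
      smul_dotProduct, dotProduct_smul, smul_eq_mul, hff, hgg, hfg, hgf]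
    ring
  have h2 : x ⬝ᵥ x = α^2 + β^2 := by
    have hgf : g ⬝ᵥ f = 0 := by rw [dotProduct_comm]; exact hfg
    simp only [hx, add_dotProduct, dotProduct_add, smul_dotProduct, dotProduct_smul,
      smul_eq_mul, hff, hgg, hfg, hgf]
    ring
  have h3 : w ⬝ᵥ x = 0 := by
    simp only [hx, dotProduct_add, dotProduct_smul, smul_eq_mul]
    exact hwx
  have := hw x
  rw [h1, h2, h3] at this
  have hab : 0 < α^2 + β^2 := by
    rcases not_and_or.mp hαβ with h | h
    · positivity
    · positivity
  rcases not_and_or.mp hαβ with h | h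
  · have hp : 0 < α ^ 2 := by positivity
    nlinarith [mul_nonneg (sq_nonneg β) (sub_nonneg.mpr hμj.le), mul_pos hp (sub_pos.mpr hμi)]
  · have hp : 0 < β ^ 2 := by positivity
    nlinarith [mul_nonneg (sq_nonneg α) (sub_nonneg.mpr hμi.le), mul_pos hp (sub_pos.mpr hμj)]

lemma transfer {V W : Type*} [Fintype V] [DecidableEq V] [Fintype W] [DecidableEq W]
    {G : SimpleGraph V} {H : SimpleGraph W} (φ : G ↪g H)
    (instH : DecidableRel H.Adj) (w : W → ℝ)
    (hw : ∀ y : W → ℝ, y ⬝ᵥ ((@SimpleGraph.adjMatrix ℝ W H instH _ _) *ᵥ y)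
        ≤ y ⬝ᵥ y + (w ⬝ᵥ y) ^ 2)
    (instG : DecidableRel G.Adj) (x : V → ℝ) :
    x ⬝ᵥ ((@SimpleGraph.adjMatrix ℝ V G instG _ _) *ᵥ x)
      ≤ x ⬝ᵥ x + ((w ∘ φ) ⬝ᵥ x) ^ 2 := by
  classical
  set y : W → ℝ := Function.extend φ x 0 with hy
  have hinj : Function.Injective φ := φ.injective
  have hyφ : ∀ i, y (φ i) = x i := fun i => hinj.extend_apply x 0 i
  have hy0 : ∀ v, v ∉ Set.range φ → y v = 0 := by
    intro v hv
    simp [hy, Function.extend_apply' _ _ _ hv]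
  have key : ∀ f : W → ℝ, (∀ v, v ∉ Set.range φ → f v = 0) →
      ∑ v, f v = ∑ i, f (φ i) := by
    intro f hf
    rw [← Finset.sum_image (fun a _ b _ h => hinj h)]
    apply (Finset.sum_subset (Finset.subset_univ _) _).symm
    intro v _ hv
    apply hf
    intro ⟨i, hi⟩
    exact hv (Finset.mem_image.mpr ⟨i, Finset.mem_univ i, hi⟩)
  have hrow : ∀ i, ((H.adjMatrix ℝ) *ᵥ y) (φ i) = ((G.adjMatrix ℝ) *ᵥ x) i := by
    intro i
    simp only [mulVec, dotProduct]
    rw [key (fun u => H.adjMatrix ℝ (φ i) u * y u)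
      (fun v hv => by simp [hy0 v hv])]
    apply Finset.sum_congr rfl
    intro j _
    rw [hyφ]
    congr 1
    simp only [SimpleGraph.adjMatrix_apply, φ.map_adj_iff]
  have h1 : x ⬝ᵥ ((G.adjMatrix ℝ) *ᵥ x) = y ⬝ᵥ ((H.adjMatrix ℝ) *ᵥ y) := by
    simp only [dotProduct]
    rw [key (fun v => y v * ((H.adjMatrix ℝ) *ᵥ y) v)
      (fun v hv => by simp [hy0 v hv])]
    apply Finset.sum_congr rfl
    intro i _
    rw [hyφ, hrow]
  have h2 : x ⬝ᵥ x = y ⬝ᵥ y := by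
    simp only [dotProduct]
    rw [key (fun v => y v * y v) (fun v hv => by simp [hy0 v hv])]
    simp only [hyφ]
  have h3 : (w ∘ φ) ⬝ᵥ x = w ⬝ᵥ y := by
    simp only [dotProduct]
    rw [key (fun v => w v * y v) (fun v hv => by simp [hy0 v hv])]
    simp only [hyφ, Function.comp]
  rw [h1, h2, h3]
  exact hw y

def F1Equiv (s : ℕ) :
    F1Vert s ≃ (Unit ⊕ Unit ⊕ Unit ⊕ Unit ⊕ Fin s ⊕ {i : Fin s // 2 ≤ (i : ℕ)}) where
  toFun v := match v with
    | .v1 => Sum.inl ()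
    | .v2 => Sum.inr (Sum.inl ())
    | .a1 => Sum.inr (Sum.inr (Sum.inl ()))
    | .a2 => Sum.inr (Sum.inr (Sum.inr (Sum.inl ())))
    | .u i => Sum.inr (Sum.inr (Sum.inr (Sum.inr (Sum.inl i))))
    | .p j => Sum.inr (Sum.inr (Sum.inr (Sum.inr (Sum.inr j))))
  invFun x := match x with
    | Sum.inl _ => .v1
    | Sum.inr (Sum.inl _) => .v2
    | Sum.inr (Sum.inr (Sum.inl _)) => .a1
    | Sum.inr (Sum.inr (Sum.inr (Sum.inl _))) => .a2
    | Sum.inr (Sum.inr (Sum.inr (Sum.inr (Sum.inl i)))) => .u i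
    | Sum.inr (Sum.inr (Sum.inr (Sum.inr (Sum.inr j)))) => .p j
  left_inv v := by cases v <;> rfl
  right_inv x := by rcases x with _ | _ | _ | _ | i | j <;> rfl

lemma sum_F1Vert {s : ℕ} (f : F1Vert s → ℝ) :
    ∑ v, f v = f .v1 + f .v2 + f .a1 + f .a2 + (∑ i, f (.u i)) + ∑ j, f (.p j) := by
  rw [← Equiv.sum_comp (F1Equiv s).symm f]
  simp [Fintype.sum_sum_type, F1Equiv]
  ring

example (s : ℕ) : True := trivial

-- test adjacency simp
example (s : ℕ) (i : Fin s) :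
    (F1 s).Adj .v1 (.u i) ↔ 2 ≤ (i : ℕ) := by
  simp [F1, SimpleGraph.fromRel_adj, F1Rel]

example (s : ℕ) (i : Fin s) (j : {i : Fin s // 2 ≤ (i : ℕ)}) :
    (F1 s).Adj (.u i) (.p j) ↔ i = j.1 := by
  simp [F1, SimpleGraph.fromRel_adj, F1Rel]

example (s : ℕ) : ¬ (F1 s).Adj .v1 .v2 := by
  simp [F1, SimpleGraph.fromRel_adj, F1Rel]

def adjF (s : ℕ) : F1Vert s → F1Vert s → ℝ
  | .v1, .a1 => 1
  | .v1, .a2 => 1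
  | .a1, .v1 => 1
  | .a2, .v1 => 1
  | .v1, .u i => if 2 ≤ (i : ℕ) then 1 else 0
  | .u i, .v1 => if 2 ≤ (i : ℕ) then 1 else 0
  | .v2, .u _ => 1
  | .u _, .v2 => 1
  | .a1, .u i => if (i : ℕ) = 0 then 1 else 0
  | .u i, .a1 => if (i : ℕ) = 0 then 1 else 0
  | .a2, .u i => if (i : ℕ) = 1 then 1 else 0
  | .u i, .a2 => if (i : ℕ) = 1 then 1 else 0
  | .u i, .p j => if i = j.1 then 1 else 0
  | .p j, .u i => if i = j.1 then 1 else 0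
  | _, _ => 0

lemma adjMatrix_F1_eq (s : ℕ) (inst : DecidableRel (F1 s).Adj) :
    (@SimpleGraph.adjMatrix ℝ _ (F1 s) inst _ _) = Matrix.of (adjF s) := by
  ext v u
  cases v <;> cases u <;> rw [SimpleGraph.adjMatrix_apply] <;>
    simp [SimpleGraph.adjMatrix_apply, F1, SimpleGraph.fromRel_adj, F1Rel, adjF]

lemma sum_subtype_ge2 {s : ℕ} (f : Fin s → ℝ) :
    ∑ j : {i : Fin s // 2 ≤ (i : ℕ)}, f j.1
      = ∑ i ∈ univ.filter (fun i : Fin s => 2 ≤ (i : ℕ)), f i :=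
  (Finset.sum_subtype _ (fun x => by simp) f).symm

lemma fin_split {s : ℕ} (hs : 3 ≤ s) (f : Fin s → ℝ) :
    ∑ i, f i = f ⟨0, by omega⟩ + f ⟨1, by omega⟩ + ∑ j : {i : Fin s // 2 ≤ (i : ℕ)}, f j.1 := by
  classical
  rw [← Finset.sum_filter_add_sum_filter_not univ (fun i : Fin s => 2 ≤ (i : ℕ)) f,
    sum_subtype_ge2]
  have h2 : (univ.filter fun i : Fin s => ¬ 2 ≤ (i : ℕ)) = {⟨0, by omega⟩, ⟨1, by omega⟩} := by
    ext i
    simp only [Finset.mem_filter, Finset.mem_univ, true_and, Finset.mem_insert,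
      Finset.mem_singleton, Fin.ext_iff]
    omega
  rw [h2, Finset.sum_pair (by simp [Fin.ext_iff])]
  ring

lemma sum_ite_ge2 {s : ℕ} (f : Fin s → ℝ) :
    ∑ i : Fin s, (if 2 ≤ (i : ℕ) then f i else 0) = ∑ j : {i : Fin s // 2 ≤ (i : ℕ)}, f j.1 := by
  classical
  rw [sum_subtype_ge2 f, Finset.sum_filter]

noncomputable def wF (s : ℕ) : F1Vert s → ℝ
  | .v1 => 1/2
  | .v2 => 1/2
  | .a1 => 1/2
  | .a2 => 1/2
  | .u i => if 2 ≤ (i : ℕ) then 1 else 1/2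
  | .p _ => 0

set_option maxHeartbeats 1000000 in
lemma F1_ineq (s : ℕ) (hs : 3 ≤ s) (inst : DecidableRel (F1 s).Adj) (y : F1Vert s → ℝ) :
    y ⬝ᵥ ((@SimpleGraph.adjMatrix ℝ _ (F1 s) inst _ _) *ᵥ y)
      ≤ y ⬝ᵥ y + ((wF s) ⬝ᵥ y) ^ 2 := by
  classical
  rw [adjMatrix_F1_eq]
  have hc0 : ∀ i : Fin s, ((i : ℕ) = 0) ↔ (i = (⟨0, by omega⟩ : Fin s)) := by
    intro i; simp [Fin.ext_iff]
  have hc1 : ∀ i : Fin s, ((i : ℕ) = 1) ↔ (i = (⟨1, by omega⟩ : Fin s)) := by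
    intro i; simp [Fin.ext_iff]
  -- row sums
  have R1 : ∑ u_, Matrix.of (adjF s) .v1 u_ * y u_
      = y .a1 + y .a2 + ∑ j : {i : Fin s // 2 ≤ (i : ℕ)}, y (.u j.1) := by
    rw [sum_F1Vert (fun u_ => Matrix.of (adjF s) .v1 u_ * y u_)]
    simp only [Matrix.of_apply, adjF, ite_mul, one_mul, zero_mul, zero_add, add_zero,
      Finset.sum_const_zero]
    rw [sum_ite_ge2 (fun i => y (.u i))]
  have R2 : ∑ u_, Matrix.of (adjF s) .v2 u_ * y u_ = ∑ i : Fin s, y (.u i) := by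
    rw [sum_F1Vert (fun u_ => Matrix.of (adjF s) .v2 u_ * y u_)]
    simp only [Matrix.of_apply, adjF, one_mul, zero_mul, zero_add, add_zero,
      Finset.sum_const_zero]
  have R3 : ∑ u_, Matrix.of (adjF s) .a1 u_ * y u_
      = y .v1 + y (.u ⟨0, by omega⟩) := by
    rw [sum_F1Vert (fun u_ => Matrix.of (adjF s) .a1 u_ * y u_)]
    simp only [Matrix.of_apply, adjF, ite_mul, one_mul, zero_mul, zero_add, add_zero,
      Finset.sum_const_zero]
    simp only [hc0]
    rw [Finset.sum_ite_eq' univ (⟨0, by omega⟩ : Fin s) (fun i => y (.u i))]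
    simp
  have R4 : ∑ u_, Matrix.of (adjF s) .a2 u_ * y u_
      = y .v1 + y (.u ⟨1, by omega⟩) := by
    rw [sum_F1Vert (fun u_ => Matrix.of (adjF s) .a2 u_ * y u_)]
    simp only [Matrix.of_apply, adjF, ite_mul, one_mul, zero_mul, zero_add, add_zero,
      Finset.sum_const_zero]
    simp only [hc1]
    rw [Finset.sum_ite_eq' univ (⟨1, by omega⟩ : Fin s) (fun i => y (.u i))]
    simp
  have R5 : ∀ i : Fin s, ∑ u_, Matrix.of (adjF s) (.u i) u_ * y u_
      = (if 2 ≤ (i : ℕ) then y .v1 else 0) + y .v2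
        + (if (i : ℕ) = 0 then y .a1 else 0) + (if (i : ℕ) = 1 then y .a2 else 0)
        + ∑ j : {k : Fin s // 2 ≤ (k : ℕ)}, (if i = j.1 then y (.p j) else 0) := by
    intro i
    rw [sum_F1Vert (fun u_ => Matrix.of (adjF s) (.u i) u_ * y u_)]
    simp only [Matrix.of_apply, adjF, ite_mul, one_mul, zero_mul, zero_add, add_zero,
      Finset.sum_const_zero]
  have R6 : ∀ j : {k : Fin s // 2 ≤ (k : ℕ)}, ∑ u_, Matrix.of (adjF s) (.p j) u_ * y u_
      = y (.u j.1) := by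
    intro j
    rw [sum_F1Vert (fun u_ => Matrix.of (adjF s) (.p j) u_ * y u_)]
    simp only [Matrix.of_apply, adjF, ite_mul, one_mul, zero_mul, zero_add, add_zero,
      Finset.sum_const_zero]
    rw [Finset.sum_ite_eq' univ (j.1 : Fin s) (fun i => y (.u i))]
    simp
  -- the u-row aggregated
  have HU : ∑ i : Fin s, y (.u i) * ((if 2 ≤ (i : ℕ) then y .v1 else 0) + y .v2
        + (if (i : ℕ) = 0 then y .a1 else 0) + (if (i : ℕ) = 1 then y .a2 else 0)
        + ∑ j : {k : Fin s // 2 ≤ (k : ℕ)}, (if i = j.1 then y (.p j) else 0))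
      = (∑ j : {k : Fin s // 2 ≤ (k : ℕ)}, y (.u j.1)) * y .v1
        + (∑ i : Fin s, y (.u i)) * y .v2
        + y (.u ⟨0, by omega⟩) * y .a1 + y (.u ⟨1, by omega⟩) * y .a2
        + ∑ j : {k : Fin s // 2 ≤ (k : ℕ)}, y (.u j.1) * y (.p j) := by
    simp only [mul_add, Finset.sum_add_distrib, mul_ite, mul_zero]
    congr 1
    · congr 1
      · congr 1
        · congr 1
          · rw [sum_ite_ge2 (fun i => y (.u i) * y .v1), Finset.sum_mul]
          · rw [Finset.sum_mul]
        · simp only [hc0]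
          rw [Finset.sum_ite_eq' univ (⟨0, by omega⟩ : Fin s)
            (fun i => y (.u i) * y .a1)]
          simp
      · simp only [hc1]
        rw [Finset.sum_ite_eq' univ (⟨1, by omega⟩ : Fin s)
          (fun i => y (.u i) * y .a2)]
        simp
    · simp only [Finset.mul_sum, mul_ite, mul_zero]
      rw [Finset.sum_comm]
      apply Finset.sum_congr rfl
      intro j _
      rw [Finset.sum_ite_eq' univ (j.1 : Fin s) (fun i => y (.u i) * y (.p j))]
      simp
  have hquad : y ⬝ᵥ (Matrix.of (adjF s) *ᵥ y)
      = y .v1 * (y .a1 + y .a2 + ∑ j : {i : Fin s // 2 ≤ (i : ℕ)}, y (.u j.1))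
      + y .v2 * (∑ i : Fin s, y (.u i))
      + y .a1 * (y .v1 + y (.u ⟨0, by omega⟩))
      + y .a2 * (y .v1 + y (.u ⟨1, by omega⟩))
      + ((∑ j : {k : Fin s // 2 ≤ (k : ℕ)}, y (.u j.1)) * y .v1
        + (∑ i : Fin s, y (.u i)) * y .v2
        + y (.u ⟨0, by omega⟩) * y .a1 + y (.u ⟨1, by omega⟩) * y .a2
        + ∑ j : {k : Fin s // 2 ≤ (k : ℕ)}, y (.u j.1) * y (.p j))
      + ∑ j : {k : Fin s // 2 ≤ (k : ℕ)}, y (.p j) * y (.u j.1) := by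
    simp only [dotProduct, Matrix.mulVec, dotProduct]
    rw [sum_F1Vert (fun v => y v * ∑ u_, Matrix.of (adjF s) v u_ * y u_)]
    rw [R1, R2, R3, R4]
    congr 1
    · congr 1
      rw [← HU]
      apply Finset.sum_congr rfl
      intro i _
      rw [R5 i]
    · apply Finset.sum_congr rfl
      intro j _
      rw [R6 j]
  have hnorm : y ⬝ᵥ y = y .v1 ^ 2 + y .v2 ^ 2 + y .a1 ^ 2 + y .a2 ^ 2
      + (∑ i : Fin s, y (.u i) ^ 2) + ∑ j : {k : Fin s // 2 ≤ (k : ℕ)}, y (.p j) ^ 2 := by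
    simp only [dotProduct]
    rw [sum_F1Vert (fun v => y v * y v)]
    ring_nf
  have hwdot : (wF s) ⬝ᵥ y = (y .v1 + y .v2 + y .a1 + y .a2) / 2
      + (∑ i : Fin s, y (.u i)) / 2
      + (∑ j : {k : Fin s // 2 ≤ (k : ℕ)}, y (.u j.1)) / 2 := by
    simp only [dotProduct]
    rw [sum_F1Vert (fun v => wF s v * y v)]
    simp only [wF, ite_mul, one_mul, zero_mul, Finset.sum_const_zero]
    have hsplit : ∀ i : Fin s, (if 2 ≤ (i : ℕ) then y (.u i) else 1 / 2 * y (.u i))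
        = y (.u i) / 2 + (if 2 ≤ (i : ℕ) then y (.u i) / 2 else 0) := by
      intro i; split <;> ring
    rw [Finset.sum_congr rfl (fun i _ => hsplit i), Finset.sum_add_distrib,
      sum_ite_ge2 (fun i => y (.u i) / 2), ← Finset.sum_div, ← Finset.sum_div]
    ring
  have hS1 : ∑ i : Fin s, y (.u i) = y (.u ⟨0, by omega⟩) + y (.u ⟨1, by omega⟩)
      + ∑ j : {k : Fin s // 2 ≤ (k : ℕ)}, y (.u j.1) :=
    fin_split hs (fun i => y (.u i))
  have hQ : ∑ i : Fin s, y (.u i) ^ 2 = y (.u ⟨0, by omega⟩) ^ 2 + y (.u ⟨1, by omega⟩) ^ 2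
      + ∑ j : {k : Fin s // 2 ≤ (k : ℕ)}, y (.u j.1) ^ 2 :=
    fin_split hs (fun i => y (.u i) ^ 2)
  have hsq : (0:ℝ) ≤ ∑ j : {k : Fin s // 2 ≤ (k : ℕ)}, (y (.u j.1) - y (.p j)) ^ 2 :=
    Finset.sum_nonneg (fun j _ => sq_nonneg _)
  have hexp : ∑ j : {k : Fin s // 2 ≤ (k : ℕ)}, (y (.u j.1) - y (.p j)) ^ 2
      = (∑ j : {k : Fin s // 2 ≤ (k : ℕ)}, y (.u j.1) ^ 2)
        - 2 * (∑ j : {k : Fin s // 2 ≤ (k : ℕ)}, y (.u j.1) * y (.p j))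
        + ∑ j : {k : Fin s // 2 ≤ (k : ℕ)}, y (.p j) ^ 2 := by
    rw [Finset.mul_sum, ← Finset.sum_sub_distrib, ← Finset.sum_add_distrib]
    apply Finset.sum_congr rfl
    intro j _
    ring
  have hT : ∑ j : {k : Fin s // 2 ≤ (k : ℕ)}, y (.p j) * y (.u j.1)
      = ∑ j : {k : Fin s // 2 ≤ (k : ℕ)}, y (.u j.1) * y (.p j) :=
    Finset.sum_congr rfl (fun j _ => mul_comm _ _)
  rw [hquad, hT, hnorm, hwdot, hS1, hQ]
  rw [hexp] at hsq
  nlinarith [hsq, sq_nonneg (y .a1 - y .a2 - y (.u ⟨0, by omega⟩) + y (.u ⟨1, by omega⟩)),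
    sq_nonneg (y .v2 - y (.u ⟨0, by omega⟩) - y (.u ⟨1, by omega⟩)
      - ∑ j : {k : Fin s // 2 ≤ (k : ℕ)}, y (.u j.1)),
    sq_nonneg (y .v1 - y .a1 - y .a2 - ∑ j : {k : Fin s // 2 ≤ (k : ℕ)}, y (.u j.1)),
    sq_nonneg (y .v1 + y .v2),
    sq_nonneg (y .v1 - y .v2 + y (.u ⟨0, by omega⟩) + y (.u ⟨1, by omega⟩) - y .a1 - y .a2)]

lemma key_lemma {V : Type*} [Fintype V] [DecidableEq V] (G : SimpleGraph V) (w : V → ℝ)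
    (hw : ∀ (inst : DecidableRel G.Adj) (x : V → ℝ),
      x ⬝ᵥ ((@SimpleGraph.adjMatrix ℝ V G inst _ _) *ᵥ x) ≤ x ⬝ᵥ x + (w ⬝ᵥ x) ^ 2) :
    eigCount G (fun t => 1 < t) ≤ 1 := by
  unfold eigCount
  exact herm_le_one _ _ w (hw _)

end Aux

/-- if a graph `G` is isomorphic to an induced subgraph of `F₁(s)` for some
integer `s ≥ 3`, then `λ₂(G) ≤ 1`, i.e. at most one eigenvalue of the adjacency matrix of
`G` exceeds `1`. -/
theorem lambda2_le_one_of_embeds_into_F1 {V : Type*} [Fintype V] [DecidableEq V]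
    (G : SimpleGraph V) (h : ∃ s : ℕ, 3 ≤ s ∧ Nonempty (G ↪g F1 s)) :
    eigCount G (fun t => 1 < t) ≤ 1 := by
  obtain ⟨s, hs, ⟨φ⟩⟩ := h
  apply key_lemma G (wF s ∘ φ)
  intro instG x
  exact transfer φ (Classical.decRel _) (wF s) (fun y => F1_ineq s hs _ y) instG x
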